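/- End-to-end extraction for Theorem 1 (Case 1), combining the forking step with the case analysis: Let n be a positive natural number, s : Fin n, y : Fin n → G₂, Q, Pk : Fin n → G₁, V, V' : G₁, scalars a, b, α, β : ZMod q with α ≠ 0, and h, h' : Fin n → ZMod q with h i = h' i for every i ≠ s and h s ≠ h' s. Suppose P₀ = a•P, Q s = α•(b•P) and U = β•P, and that both verification equations hold: e(V, P) = (∏ i, y i) · e(∑ i, (h i)•(Q i), P₀) · e(∑ i, (h i)•(Pk i), U) and e(V', P) = (∏ i, y i) · e(∑ i, (h' i)•(Q i), P₀) · e(∑ i, (h' i)•(Pk i), U). Then (a*b)•P = α⁻¹•((h s - h' s)⁻¹•(V - V') - β•(Pk s)). -/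

import Mathlib

theorem clring_end_to_end_theorem1_case1
    {q : ℕ} [Fact (Nat.Prime q)]
    {G₁ : Type*} [AddCommGroup G₁] [Module (ZMod q) G₁]
    {G₂ : Type*} [CommGroup G₂]
    (P : G₁) (e : G₁ → G₁ → G₂)
    (e_add_left : ∀ x y z : G₁, e (x + y) z = e x z * e y z)
    (e_add_right : ∀ x y z : G₁, e x (y + z) = e x y * e x z)
    (e_smul : ∀ (a : ZMod q) (x y : G₁), e (a • x) y = e x (a • y))
    (e_nd : ∀ x : G₁, e x P = 1 → x = 0)
    (n : ℕ) (hn : 0 < n) (s : Fin n)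
    (y : Fin n → G₂) (Q Pk : Fin n → G₁) (V V' P₀ U : G₁)
    (a b α β : ZMod q) (hα : α ≠ 0)
    (h h' : Fin n → ZMod q) (hhh : ∀ i, i ≠ s → h i = h' i) (hs : h s ≠ h' s)
    (hP₀ : P₀ = a • P) (hQs : Q s = α • (b • P)) (hU : U = β • P)
    (hver : e V P = (∏ i, y i) * e (∑ i, h i • Q i) P₀ * e (∑ i, h i • Pk i) U)
    (hver' : e V' P = (∏ i, y i) * e (∑ i, h' i • Q i) P₀ * e (∑ i, h' i • Pk i) U) :
    (a * b) • P = α⁻¹ • ((h s - h' s)⁻¹ • (V - V') - β • Pk s) := by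
  have e_zero : ∀ z : G₁, e 0 z = 1 := by
    intro z
    have h0 := e_add_left 0 0 z
    rw [add_zero] at h0
    exact (left_eq_mul.mp h0)
  have e_neg : ∀ x z : G₁, e (-x) z = (e x z)⁻¹ := by
    intro x z
    have h0 : e (-x) z * e x z = 1 := by
      rw [← e_add_left, neg_add_cancel, e_zero]
    exact eq_inv_of_mul_eq_one_left h0
  have e_sub : ∀ x x' z : G₁, e (x - x') z = e x z * (e x' z)⁻¹ := by
    intro x x' z
    rw [sub_eq_add_neg, e_add_left, e_neg]
  -- collapse sums
  have hc : h s - h' s ≠ 0 := sub_ne_zero.mpr hs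
  have sumQ : (∑ i, h i • Q i) - (∑ i, h' i • Q i) = (h s - h' s) • Q s := by
    rw [← Finset.sum_sub_distrib]
    rw [Finset.sum_eq_single s]
    · rw [← sub_smul]
    · intro i _ hi
      rw [hhh i hi, sub_self]
    · intro hsi; exact absurd (Finset.mem_univ s) hsi
  have sumPk : (∑ i, h i • Pk i) - (∑ i, h' i • Pk i) = (h s - h' s) • Pk s := by
    rw [← Finset.sum_sub_distrib]
    rw [Finset.sum_eq_single s]
    · rw [← sub_smul]
    · intro i _ hi
      rw [hhh i hi, sub_self]
    · intro hsi; exact absurd (Finset.mem_univ s) hsi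
  have key1 : e (V - V') P
      = e ((h s - h' s) • Q s) P₀ * e ((h s - h' s) • Pk s) U := by
    rw [e_sub, hver, hver', ← sumQ, ← sumPk, e_sub, e_sub]
    simp [mul_comm, mul_left_comm, mul_assoc]
  have key2 : e (V - V') P
      = e ((h s - h' s) • (a • Q s) + (h s - h' s) • (β • Pk s)) P := by
    rw [key1, hP₀, hU, e_add_left, ← e_smul a, ← e_smul β,
      smul_comm a, smul_comm β]
  have key : V - V' = (h s - h' s) • (a • Q s) + (h s - h' s) • (β • Pk s) := by
    have h0 : e (V - V' - ((h s - h' s) • (a • Q s) + (h s - h' s) • (β • Pk s))) P = 1 := by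
      rw [e_sub, key2, mul_inv_cancel]
    exact sub_eq_zero.mp (e_nd _ h0)
  rw [key, hQs]
  rw [smul_add, inv_smul_smul₀ hc, inv_smul_smul₀ hc, add_sub_cancel_right]
  rw [smul_smul, smul_smul, smul_smul]
  congr 1
  field_simp
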